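/- Let (X,d) be a ν-generalized metric space, T : X → X, m : X × X → [0,∞), and x ∈ X. Suppose: (i) for every ε > 0 there exist δ > 0 and N such that for all p, q ≥ N, m(T^p x, T^q x) < δ + ε implies d(T^{p+1} x, T^{q+1} x) ≤ ε; (ii) for any two subsequences {T^{p_i} x}, {T^{q_i} x} of the orbit, limsup_i m(T^{p_i}x, T^{q_i}x) ≤ limsup_i d(T^{p_i}x, T^{q_i}x); (iii) d(T^n x, T^{n+1} x) + d(T^n x, T^{n+2} x) → 0. Then the sequence {T^n x} is Cauchy. -/

import Mathlib

open Filter Topology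

/-- `(X,d)` is a ν-generalized metric space. -/
def NuGenMetric (ν : ℕ) {X : Type*} (d : X → X → ℝ) : Prop :=
  (∀ x y, 0 ≤ d x y) ∧
  (∀ x y, d x y = 0 ↔ x = y) ∧
  (∀ x y, d x y = d y x) ∧
  (∀ u : Fin (ν + 2) → X, Function.Injective u →
    d (u 0) (u (Fin.last (ν + 1))) ≤ ∑ i : Fin (ν + 1), d (u i.castSucc) (u i.succ))

/-- `{x n}` is `k`-Cauchy: `lim_n sup_m d(x_n, x_{n+1+mk}) = 0` (sup taken in `[0,∞]`). -/
def IsKCauchy {X : Type*} (d : X → X → ℝ) (x : ℕ → X) (k : ℕ) : Prop :=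
  Filter.Tendsto (fun n => ⨆ m : ℕ, ENNReal.ofReal (d (x n) (x (n + 1 + m * k))))
    Filter.atTop (nhds 0)


private lemma path_exists (c e n : ℕ) (hce : c < e) (hn : 2 * c + 2 ≤ n) :
    ∃ v : ℕ → ℕ, v 0 = n ∧ v e = n + (e - c) ∧
      (∀ s t, s ≤ e → t ≤ e → v s = v t → s = t) ∧
      (∀ t, t < e → (v (t + 1) = v t + 1 ∨ v (t + 1) = v t + 2 ∨
        v t = v (t + 1) + 1 ∨ v t = v (t + 1) + 2)) ∧
      (∀ t, t ≤ e → n - c - 1 ≤ v t) := by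
  refine ⟨fun t => if 2 * t ≤ c then n - 2 * t else if t ≤ c then n + 2 * t - 2 * c - 1
      else n + t - c, ?_, ?_, ?_, ?_, ?_⟩
  · simp
  · dsimp only; split_ifs <;> omega
  · intro s t hs ht h
    dsimp only at h
    split_ifs at h <;> omega
  · intro t ht
    dsimp only
    split_ifs <;> omega
  · intro t ht
    dsimp only
    split_ifs <;> omega

theorem stmt_5 {X : Type*} (ν : ℕ) (hν : 0 < ν) (d : X → X → ℝ)
    (hX : NuGenMetric ν d) (T : X → X) (m : X → X → ℝ) (hm0 : ∀ a b, 0 ≤ m a b) (x : X)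
    (h1 : ∀ ε > (0 : ℝ), ∃ δ > (0 : ℝ), ∃ N : ℕ, ∀ p ≥ N, ∀ q ≥ N,
      m (T^[p] x) (T^[q] x) < δ + ε → d (T^[p + 1] x) (T^[q + 1] x) ≤ ε)
    (h2 : ∀ p q : ℕ → ℕ, StrictMono p → StrictMono q →
      Filter.limsup (fun i => ENNReal.ofReal (m (T^[p i] x) (T^[q i] x))) Filter.atTop
        ≤ Filter.limsup (fun i => ENNReal.ofReal (d (T^[p i] x) (T^[q i] x))) Filter.atTop)
    (h3 : Filter.Tendsto
      (fun n => d (T^[n] x) (T^[n + 1] x) + d (T^[n] x) (T^[n + 2] x))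
      Filter.atTop (nhds 0)) :
    IsKCauchy d (fun n => T^[n] x) 1 := by
  obtain ⟨hd0, hdeq, hdsymm, hpoly⟩ := hX
  have key : ∀ r : ℝ, 0 < r → ∃ N : ℕ, ∀ n, N ≤ n → ∀ k : ℕ,
      d (T^[n] x) (T^[n + 1 + k] x) ≤ r := by
    by_cases hinj : Function.Injective (fun n : ℕ => T^[n] x)
    · -- main case: injective orbit
        by_contra hno
        push_neg at hno
        obtain ⟨ε, hε, Hbad⟩ := hno
        obtain ⟨δ, hδ, N₀, hMK⟩ := h1 ε hε
        set β : ℝ := min ε δ / (2 * ((ν : ℝ) + 1)) with hβdef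
        have hνR : (0 : ℝ) < (ν : ℝ) + 1 := by positivity
        have hmin0 : 0 < min ε δ := lt_min hε hδ
        have hβ : 0 < β := by positivity
        have hβsum : ((ν : ℝ) + 1) * β = min ε δ / 2 := by
          rw [hβdef]; field_simp
        have hβε : ((ν : ℝ) + 1) * β < ε := by
          rw [hβsum]
          have := min_le_left ε δ
          linarith
        have hβδ : (ν : ℝ) * β ≤ δ / 2 := by
          have h1' : (ν : ℝ) * β ≤ ((ν : ℝ) + 1) * β := by nlinarith
          rw [hβsum] at h1'
          have := min_le_right ε δ
          linarith
        -- small steps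
        obtain ⟨M₁, hM₁⟩ : ∃ M₁ : ℕ, ∀ n, M₁ ≤ n →
            d (T^[n] x) (T^[n + 1] x) ≤ β ∧ d (T^[n] x) (T^[n + 2] x) ≤ β := by
          have hev := h3.eventually_lt_const hβ
          rw [eventually_atTop] at hev
          obtain ⟨M₁, hM₁⟩ := hev
          refine ⟨M₁, fun n hn => ?_⟩
          have h := hM₁ n hn
          have h1'' := hd0 (T^[n] x) (T^[n + 1] x)
          have h2'' := hd0 (T^[n] x) (T^[n + 2] x)
          constructor <;> linarith
        -- small gaps up to ν + 1
        have smallgap : ∀ n, M₁ + 2 * ν + 4 ≤ n → ∀ j, 1 ≤ j → j ≤ ν + 1 →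
            d (T^[n] x) (T^[n + j] x) ≤ ((ν : ℝ) + 1) * β := by
          intro n hn j hj1 hj2
          obtain ⟨v, hv0, hve, hvinj, hvstep, hvlb⟩ :=
            path_exists (ν + 1 - j) (ν + 1) n (by omega) (by omega)
          have hedge : ∀ t, t < ν + 1 → d (T^[v t] x) (T^[v (t + 1)] x) ≤ β := by
            intro t ht
            have hlb := hvlb t (by omega)
            have hlb2 := hvlb (t + 1) (by omega)
            rcases hvstep t ht with h | h | h | h
            · rw [h]; exact (hM₁ (v t) (by omega)).1
            · rw [h]; exact (hM₁ (v t) (by omega)).2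
            · rw [hdsymm, h]; exact (hM₁ (v (t + 1)) (by omega)).1
            · rw [hdsymm, h]; exact (hM₁ (v (t + 1)) (by omega)).2
          have huinj : Function.Injective (fun i : Fin (ν + 2) => T^[v i.val] x) := by
            intro i j hij
            have h1'' := i.isLt
            have h2'' := j.isLt
            exact Fin.ext (hvinj i.val j.val (by omega) (by omega) (hinj hij))
          have hu := hpoly (fun i : Fin (ν + 2) => T^[v i.val] x) huinj
          simp only [Fin.val_zero, Fin.val_last, Fin.coe_castSucc, Fin.val_succ] at hu
          rw [hv0, show v (ν + 1) = n + j from by rw [hve]; congr 1; omega] at hu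
          refine hu.trans ?_
          calc (∑ i : Fin (ν + 1), d (T^[v i.val] x) (T^[v (i.val + 1)] x))
              ≤ ∑ _i : Fin (ν + 1), β :=
                Finset.sum_le_sum fun i _ => hedge i.val i.isLt
            _ = ((ν : ℝ) + 1) * β := by
                rw [Finset.sum_const, Finset.card_univ, Fintype.card_fin, nsmul_eq_mul]
                push_cast; ring
        -- Claim C
        have claimC : ∀ K : ℕ, ∃ p q : ℕ, K < p ∧ p + ν < q ∧
            ε < d (T^[p + 1] x) (T^[q + 1] x) ∧ d (T^[p] x) (T^[q] x) ≤ ε + δ / 2 := by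
          intro K
          obtain ⟨a, ha, k₀, hk₀⟩ := Hbad (max (M₁ + 2 * ν + 4) (K + 2) + 1)
          have haM : M₁ + 2 * ν + 5 ≤ a := by
            have := le_max_left (M₁ + 2 * ν + 4) (K + 2); omega
          have haK : K + 3 ≤ a := by
            have := le_max_right (M₁ + 2 * ν + 4) (K + 2); omega
          have hexq : ∃ q, a < q ∧ ε < d (T^[a] x) (T^[q] x) := ⟨a + 1 + k₀, by omega, hk₀⟩
          classical
          obtain ⟨q₀, ⟨hq₀a, hq₀d⟩, hq₀min⟩ :
              ∃ q₀, (a < q₀ ∧ ε < d (T^[a] x) (T^[q₀] x)) ∧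
                ∀ q' < q₀, ¬(a < q' ∧ ε < d (T^[a] x) (T^[q'] x)) :=
            ⟨Nat.find hexq, Nat.find_spec hexq, fun q' h => Nat.find_min hexq h⟩
          have hmin : ∀ q', a < q' → q' < q₀ → d (T^[a] x) (T^[q'] x) ≤ ε := by
            intro q' h1' h2'
            by_contra hgt
            push_neg at hgt
            exact hq₀min q' h2' ⟨h1', hgt⟩
          have hgap : a + ν + 2 ≤ q₀ := by
            by_contra hlt
            push_neg at hlt
            have h1j : 1 ≤ q₀ - a := by omega
            have h2j : q₀ - a ≤ ν + 1 := by omega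
            have hsg := smallgap a (by omega) (q₀ - a) h1j h2j
            rw [show a + (q₀ - a) = q₀ by omega] at hsg
            linarith
          refine ⟨a - 1, q₀ - 1, by omega, by omega, ?_, ?_⟩
          · rw [show a - 1 + 1 = a by omega, show q₀ - 1 + 1 = q₀ by omega]
            exact hq₀d
          · set w : ℕ → ℕ := fun t => if t = 0 then a - 1 else if t = 1 then a
              else q₀ - ν - 2 + t with hwdef
            have hw0 : w 0 = a - 1 := by simp [hwdef]
            have hw1 : w 1 = a := by simp [hwdef]
            have hwge : ∀ t, 2 ≤ t → w t = q₀ - ν - 2 + t := by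
              intro t ht
              simp only [hwdef]
              rw [if_neg (by omega), if_neg (by omega)]
            have hwinj : ∀ s t, s ≤ ν + 1 → t ≤ ν + 1 → w s = w t → s = t := by
              intro s t hs ht h
              simp only [hwdef] at h
              split_ifs at h <;> omega
            have huinj : Function.Injective (fun i : Fin (ν + 2) => T^[w i.val] x) := by
              intro i j hij
              have h1'' := i.isLt
              have h2'' := j.isLt
              exact Fin.ext (hwinj i.val j.val (by omega) (by omega) (hinj hij))
            have hu := hpoly (fun i : Fin (ν + 2) => T^[w i.val] x) huinj
            simp only [Fin.val_zero, Fin.val_last, Fin.coe_castSucc, Fin.val_succ] at hu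
            rw [hw0, show w (ν + 1) = q₀ - 1 from by rw [hwge (ν + 1) (by omega)]; omega] at hu
            refine hu.trans ?_
            have hbound : ∀ i : Fin (ν + 1),
                d (T^[w i.val] x) (T^[w (i.val + 1)] x)
                  ≤ β + (if i = (⟨1, by omega⟩ : Fin (ν + 1)) then ε - β else 0) := by
              intro i
              by_cases h0 : i.val = 0
              · rw [if_neg (by simp [Fin.ext_iff, h0])]
                rw [h0, show (0 : ℕ) + 1 = 1 from rfl, hw0, hw1]
                have hst := (hM₁ (a - 1) (by omega)).1
                rw [show a - 1 + 1 = a by omega] at hst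
                linarith
              · by_cases h1' : i.val = 1
                · rw [if_pos (by simp [Fin.ext_iff, h1'])]
                  rw [h1', show (1 : ℕ) + 1 = 2 from rfl, hw1, hwge 2 (by omega)]
                  have hm' : d (T^[a] x) (T^[q₀ - ν - 2 + 2] x) ≤ ε := by
                    apply hmin <;> omega
                  linarith
                · rw [if_neg (by simp [Fin.ext_iff, h1'])]
                  have h2' : 2 ≤ i.val := by omega
                  rw [hwge i.val h2', hwge (i.val + 1) (by omega),
                    show q₀ - ν - 2 + (i.val + 1) = (q₀ - ν - 2 + i.val) + 1 by omega]
                  have := (hM₁ (q₀ - ν - 2 + i.val) (by omega)).1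
                  linarith
            calc (∑ i : Fin (ν + 1), d (T^[w i.val] x) (T^[w (i.val + 1)] x))
                ≤ ∑ i : Fin (ν + 1), (β + (if i = (⟨1, by omega⟩ : Fin (ν + 1)) then ε - β else 0)) :=
                  Finset.sum_le_sum fun i _ => hbound i
              _ = ((ν : ℝ) + 1) * β + (ε - β) := by
                  rw [Finset.sum_add_distrib, Finset.sum_const, Finset.card_univ,
                    Fintype.card_fin, nsmul_eq_mul, Finset.sum_ite_eq' Finset.univ,
                    if_pos (Finset.mem_univ _)]
                  push_cast
                  ring
              _ ≤ ε + δ / 2 := by linarith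
        -- build the sequences and derive the contradiction
        obtain ⟨p', q', hp1, hp2, hp3, hp4⟩ :
            ∃ p' q' : ℕ → ℕ, (∀ K, K < p' K) ∧ (∀ K, p' K + ν < q' K) ∧
              (∀ K, ε < d (T^[p' K + 1] x) (T^[q' K + 1] x)) ∧
              (∀ K, d (T^[p' K] x) (T^[q' K] x) ≤ ε + δ / 2) := by
          choose p' q' h1' h2' h3' h4' using claimC
          exact ⟨p', q', h1', h2', h3', h4'⟩
        obtain ⟨G, hG0, hGsucc⟩ : ∃ G : ℕ → ℕ, G 0 = N₀ ∧ ∀ i, G (i + 1) = q' (G i) :=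
          ⟨fun i => Nat.rec N₀ (fun _ prev => q' prev) i, rfl, fun i => rfl⟩
        have hGlt : ∀ i, G i < G (i + 1) := by
          intro i
          have h₁ := hp1 (G i)
          have h₂ := hp2 (G i)
          rw [hGsucc]
          omega
        have hGmono : StrictMono G := strictMono_nat_of_lt_succ hGlt
        have hPmono : StrictMono (fun i => p' (G i)) := by
          apply strictMono_nat_of_lt_succ
          intro i
          have h₁ := hp2 (G i)
          have h₂ := hp1 (G (i + 1))
          have h₃ := hGsucc i
          show p' (G i) < p' (G (i + 1))
          omega
        have hQmono : StrictMono (fun i => q' (G i)) := by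
          intro i j hij
          have h' := hGmono (Nat.succ_lt_succ hij)
          rw [hGsucc, hGsucc] at h'
          exact h'
        have hPN : ∀ i, N₀ ≤ p' (G i) := by
          intro i
          have h₁ : G 0 ≤ G i := hGmono.monotone (Nat.zero_le i)
          have h₂ := hp1 (G i)
          omega
        have hQN : ∀ i, N₀ ≤ q' (G i) := by
          intro i
          have h₁ := hPN i
          have h₂ := hp2 (G i)
          omega
        have hls := h2 (fun i => p' (G i)) (fun i => q' (G i)) hPmono hQmono
        have hRHS : Filter.limsup
            (fun i => ENNReal.ofReal (d (T^[p' (G i)] x) (T^[q' (G i)] x))) Filter.atTop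
              ≤ ENNReal.ofReal (ε + δ / 2) := by
          exact Filter.limsup_le_of_le (by isBoundedDefault)
            (Filter.Eventually.of_forall fun i => ENNReal.ofReal_le_ofReal (hp4 (G i)))
        have hlt : Filter.limsup
            (fun i => ENNReal.ofReal (m (T^[p' (G i)] x) (T^[q' (G i)] x))) Filter.atTop
              < ENNReal.ofReal (ε + δ) := by
          refine lt_of_le_of_lt (le_trans hls hRHS) ?_
          rw [ENNReal.ofReal_lt_ofReal_iff (by linarith)]
          linarith
        obtain ⟨i, hi⟩ := (Filter.eventually_lt_of_limsup_lt hlt).exists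
        have hmi : m (T^[p' (G i)] x) (T^[q' (G i)] x) < δ + ε := by
          have h' := (ENNReal.ofReal_lt_ofReal_iff (by linarith)).mp hi
          linarith
        have hcon := hMK (p' (G i)) (hPN i) (q' (G i)) (hQN i) hmi
        have hgt := hp3 (G i)
        linarith
    · -- orbit eventually constant
        rw [Function.not_injective_iff] at hinj
        obtain ⟨i0, j0, hfij0, hne0⟩ := hinj
        have main : ∀ i j : ℕ, i < j → T^[i] x = T^[j] x →
            ∀ n, i ≤ n → T^[n] x = T^[i] x := by
          intro i j hij hfij
          have hper : ∀ t : ℕ, T^[i + t * (j - i)] x = T^[i] x := by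
            intro t
            induction t with
            | zero => simp
            | succ t ih =>
              have e1 : i + (t + 1) * (j - i) = (j - i) + (i + t * (j - i)) := by ring
              rw [e1, Function.iterate_add_apply, ih, ← Function.iterate_add_apply,
                show (j - i) + i = j by omega]
              exact hfij.symm
          have e2 : ∀ t : ℕ, T^[i + t * (j - i) + 1] x = T^[i + 1] x := by
            intro t
            rw [show i + t * (j - i) + 1 = 1 + (i + t * (j - i)) by omega,
              Function.iterate_add_apply, hper t, ← Function.iterate_add_apply,
              Nat.add_comm 1 i]
          have hb : ∀ t : ℕ, d (T^[i] x) (T^[i + 1] x) ≤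
              d (T^[i + t * (j - i)] x) (T^[i + t * (j - i) + 1] x)
                + d (T^[i + t * (j - i)] x) (T^[i + t * (j - i) + 2] x) := by
            intro t
            rw [hper t, e2 t]
            have := hd0 (T^[i] x) (T^[i + t * (j - i) + 2] x)
            linarith
          have htend : Filter.Tendsto (fun t : ℕ => i + t * (j - i)) atTop atTop := by
            apply tendsto_atTop_mono (f := fun t : ℕ => t)
            · intro t
              have : t ≤ t * (j - i) := Nat.le_mul_of_pos_right t (by omega)
              omega
            · exact tendsto_id
          have hlim := h3.comp htend
          have h0' : d (T^[i] x) (T^[i + 1] x) ≤ 0 := ge_of_tendsto' hlim hb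
          have hdz : d (T^[i] x) (T^[i + 1] x) = 0 :=
            le_antisymm h0' (hd0 _ _)
          have hstep : T^[i] x = T^[i + 1] x := (hdeq _ _).mp hdz
          have hconst : ∀ s : ℕ, T^[i + s] x = T^[i] x := by
            intro s
            induction s with
            | zero => rfl
            | succ s ih =>
              rw [show i + (s + 1) = 1 + (i + s) by omega, Function.iterate_add_apply, ih,
                ← Function.iterate_add_apply, Nat.add_comm 1 i]
              exact hstep.symm
          intro n hn
          obtain ⟨s, rfl⟩ := Nat.exists_eq_add_of_le hn
          exact hconst s
        have C : ∃ i₀, ∀ n, i₀ ≤ n → T^[n] x = T^[i₀] x := by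
          rcases lt_or_gt_of_ne hne0 with h | h
          · exact ⟨i0, main i0 j0 h hfij0⟩
          · exact ⟨j0, main j0 i0 h hfij0.symm⟩
        obtain ⟨i₀, hC⟩ := C
        intro r hr
        refine ⟨i₀, fun n hn k => ?_⟩
        rw [hC n hn, hC (n + 1 + k) (by omega)]
        have : d (T^[i₀] x) (T^[i₀] x) = 0 := (hdeq _ _).mpr rfl
        linarith
  unfold IsKCauchy
  rw [ENNReal.tendsto_nhds_zero]
  intro ε hε
  have h2e : min 1 ε ≠ ⊤ := ((min_le_left 1 ε).trans_lt ENNReal.one_lt_top).ne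
  have hεr : 0 < (min 1 ε).toReal :=
    ENNReal.toReal_pos (ne_of_gt (lt_min one_pos hε)) h2e
  obtain ⟨N, hN⟩ := key _ hεr
  rw [eventually_atTop]
  refine ⟨N, fun n hn => ?_⟩
  refine iSup_le fun k => ?_
  have hk := hN n hn k
  calc ENNReal.ofReal (d (T^[n] x) (T^[n + 1 + k * 1] x))
      ≤ ENNReal.ofReal (min 1 ε).toReal :=
        ENNReal.ofReal_le_ofReal (by simpa [mul_one] using hk)
    _ = min 1 ε := ENNReal.ofReal_toReal h2e
    _ ≤ ε := min_le_right _ _
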